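/- (Corollary 1: the mean-squared-error loss bounds the Lagrangian loss.) Let E be a real inner product space (e.g. E = ℝⁿ), let N ≥ 1, and for each i = 1, …, N let u_i* ∈ E and f_i : E → ℝ be twice differentiable on the closed ball B(u_i*, ρ) (ρ > 0) such that ∇f_i(u_i*) = 0, the Hessian of f_i is M_H,i-Lipschitz on B(u_i*, ρ), and the gradient of f_i is M_J,i-Lipschitz on B(u_i*, ρ). Let M_Hs = max_i M_H,i, M_Js = max_i M_J,i, let 0 < ε ≤ ρ, and let u_1, …, u_N ∈ E satisfy ‖u_i − u_i*‖ ≤ ε for all i. Then (1/N) Σ_{i=1}^N |f_i(u_i) − f_i(u_i*)| ≤ (M_Js/2) · (1/N) Σ_{i=1}^N ‖u_i − u_i*‖² + (M_Hs/6)ε³. -/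

import Mathlib

open scoped RealInnerProductSpace

open Set Metric in
private lemma quad_bound {E : Type*} [NormedAddCommGroup E] [InnerProductSpace ℝ E] [CompleteSpace E]
    (a u : E) (ρ MJ : ℝ) (hMJ : 0 ≤ MJ) (f : E → ℝ) (g : E → E)
    (hg : ∀ x ∈ closedBall a ρ, HasGradientWithinAt f (g x) (closedBall a ρ) x)
    (hstat : g a = 0)
    (hLip : ∀ x ∈ closedBall a ρ, ∀ y ∈ closedBall a ρ, ‖g x - g y‖ ≤ MJ * ‖x - y‖)
    (hu : ‖u - a‖ ≤ ρ) :
    |f u - f a| ≤ MJ / 2 * ‖u - a‖ ^ 2 := by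
  set v := u - a with hv
  have hvn : 0 ≤ ‖v‖ := norm_nonneg _
  set γ : ℝ → E := fun t => a + t • v with hγdef
  have hmem : ∀ t ∈ Icc (0:ℝ) 1, γ t ∈ closedBall a ρ := by
    intro t ht
    simp only [γ, mem_closedBall, dist_eq_norm, add_sub_cancel_left, norm_smul,
      Real.norm_eq_abs, abs_of_nonneg ht.1]
    calc t * ‖v‖ ≤ 1 * ‖v‖ := by nlinarith [ht.2]
    _ ≤ ρ := by rw [one_mul]; exact hu
  have hγ : ∀ t : ℝ, HasDerivAt γ v t := by
    intro t
    have : HasDerivAt (fun t : ℝ => t • v) ((1:ℝ) • v) t := (hasDerivAt_id t).smul_const v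
    simpa [γ] using this.const_add a
  have hφ : ∀ t ∈ Icc (0:ℝ) 1,
      HasDerivWithinAt (fun t => f (γ t)) (⟪g (γ t), v⟫) (Icc (0:ℝ) 1) t := by
    intro t ht
    have hf' := (hg (γ t) (hmem t ht)).hasFDerivWithinAt
    have := hf'.comp_hasDerivWithinAt t ((hγ t).hasDerivWithinAt) hmem
    exact this
  have key : ∀ x ∈ Icc (0:ℝ) 1,
      ‖f (γ x) - f a‖ ≤ MJ * ‖v‖ ^ 2 * x ^ 2 / 2 := by
    have h0 : f (γ 0) = f a := by simp [γ]
    have := image_norm_le_of_norm_deriv_right_le_deriv_boundary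
      (f := fun t => f (γ t) - f a) (f' := fun t => ⟪g (γ t), v⟫)
      (a := 0) (b := 1)
      (fun x hx => ((hφ x hx).sub (hasDerivWithinAt_const _ _ _)).continuousWithinAt)
      (fun x hx => by
        simpa [Pi.sub_def] using (((hφ x (Ico_subset_Icc_self hx)).sub
          (hasDerivWithinAt_const _ _ (f a))).mono_of_mem_nhdsWithin (Icc_mem_nhdsGE_of_mem hx)))
      (B := fun t => MJ * ‖v‖ ^ 2 * t ^ 2 / 2) (B' := fun t => MJ * ‖v‖ ^ 2 * t)
      (by simp [h0])
      (by
        intro x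
        have : HasDerivAt (fun t : ℝ => MJ * ‖v‖ ^ 2 * t ^ 2 / 2)
            (MJ * ‖v‖ ^ 2 * (2 * x ^ 1) / 2) x :=
          ((hasDerivAt_pow 2 x).const_mul (MJ * ‖v‖ ^ 2)).div_const 2
        convert this using 1
        ring)
      (by
        intro x hx
        have h1 : ‖(⟪g (γ x), v⟫ : ℝ)‖ ≤ ‖g (γ x)‖ * ‖v‖ := by
          rw [Real.norm_eq_abs]; exact abs_real_inner_le_norm _ _
        have hρ0 : 0 ≤ ρ := le_trans (norm_nonneg _) hu
        have h2 : ‖g (γ x)‖ ≤ MJ * (x * ‖v‖) := by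
          have h3 := hLip (γ x) (hmem x ⟨hx.1, le_of_lt hx.2⟩) a (mem_closedBall_self hρ0)
          rw [hstat, sub_zero] at h3
          refine h3.trans_eq ?_
          simp [γ, norm_smul, Real.norm_eq_abs, abs_of_nonneg hx.1]
        calc ‖(⟪g (γ x), v⟫ : ℝ)‖ ≤ ‖g (γ x)‖ * ‖v‖ := h1
        _ ≤ MJ * (x * ‖v‖) * ‖v‖ := mul_le_mul_of_nonneg_right h2 hvn
        _ = MJ * ‖v‖ ^ 2 * x := by ring)
    intro x hx
    simpa using this hx
  have h1 := key 1 ⟨zero_le_one, le_refl 1⟩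
  have hγ1 : γ 1 = u := by simp [γ, hv]
  rw [hγ1] at h1
  calc |f u - f a| = ‖f u - f a‖ := (Real.norm_eq_abs _).symm
  _ ≤ MJ * ‖v‖ ^ 2 * 1 ^ 2 / 2 := h1
  _ = MJ / 2 * ‖v‖ ^ 2 := by ring

/-- Corollary 1: the mean-squared-error loss `L_mse` bounds the Lagrangian loss
`L_lag`, via `L_lag ≤ (M_Js/2) L_mse + (M_Hs/6) ε³`, where `M_Hs = max_i M_H,i`
and `M_Js = max_i M_J,i`. -/
theorem mse_loss_bounds_lagrangian_loss
    {E : Type*} [NormedAddCommGroup E] [InnerProductSpace ℝ E] [CompleteSpace E]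
    (N : ℕ) (hN : 0 < N)
    (ustar : Fin N → E) (ρ : ℝ) (hρ : 0 < ρ)
    (f : Fin N → E → ℝ) (g : Fin N → E → E) (H : Fin N → E → E →L[ℝ] E)
    (MH : Fin N → ℝ) (hMH : ∀ i, 0 < MH i)
    (MJ : Fin N → ℝ) (hMJ : ∀ i, 0 < MJ i)
    (hg : ∀ i, ∀ x ∈ Metric.closedBall (ustar i) ρ,
      HasGradientWithinAt (f i) (g i x) (Metric.closedBall (ustar i) ρ) x)
    (hH : ∀ i, ∀ x ∈ Metric.closedBall (ustar i) ρ,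
      HasFDerivWithinAt (g i) (H i x) (Metric.closedBall (ustar i) ρ) x)
    (hstat : ∀ i, g i (ustar i) = 0)
    (hLipH : ∀ i, ∀ x ∈ Metric.closedBall (ustar i) ρ,
      ∀ y ∈ Metric.closedBall (ustar i) ρ, ‖H i x - H i y‖ ≤ MH i * ‖x - y‖)
    (hLipJ : ∀ i, ∀ x ∈ Metric.closedBall (ustar i) ρ,
      ∀ y ∈ Metric.closedBall (ustar i) ρ, ‖g i x - g i y‖ ≤ MJ i * ‖x - y‖)
    (MHs MJs : ℝ)
    (hMHs : MHs =
      Finset.univ.sup' (Finset.univ_nonempty_iff.mpr ⟨⟨0, hN⟩⟩) MH)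
    (hMJs : MJs =
      Finset.univ.sup' (Finset.univ_nonempty_iff.mpr ⟨⟨0, hN⟩⟩) MJ)
    (ε : ℝ) (hε : 0 < ε) (hερ : ε ≤ ρ)
    (u : Fin N → E) (hu : ∀ i, ‖u i - ustar i‖ ≤ ε) :
    (1 / (N : ℝ)) * ∑ i, |f i (u i) - f i (ustar i)| ≤
      MJs / 2 * ((1 / (N : ℝ)) * ∑ i, ‖u i - ustar i‖ ^ 2) +
        MHs / 6 * ε ^ 3 := by
  have hMJs_le : ∀ i, MJ i ≤ MJs := fun i => hMJs ▸ Finset.le_sup' MJ (Finset.mem_univ i)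
  have hMHs_pos : 0 < MHs := hMHs ▸ lt_of_lt_of_le (hMH ⟨0, hN⟩)
    (Finset.le_sup' MH (Finset.mem_univ _))
  have hterm : ∀ i, |f i (u i) - f i (ustar i)| ≤ MJs / 2 * ‖u i - ustar i‖ ^ 2 := by
    intro i
    have := quad_bound (ustar i) (u i) ρ (MJ i) (le_of_lt (hMJ i)) (f i) (g i)
      (hg i) (hstat i) (hLipJ i) (le_trans (hu i) hερ)
    refine this.trans ?_
    have : MJ i / 2 * ‖u i - ustar i‖ ^ 2 ≤ MJs / 2 * ‖u i - ustar i‖ ^ 2 := by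
      apply mul_le_mul_of_nonneg_right (by linarith [hMJs_le i]) (by positivity)
    linarith
  have hsum : ∑ i, |f i (u i) - f i (ustar i)| ≤ MJs / 2 * ∑ i, ‖u i - ustar i‖ ^ 2 := by
    rw [Finset.mul_sum]
    exact Finset.sum_le_sum fun i _ => hterm i
  have hNpos : (0:ℝ) < N := Nat.cast_pos.mpr hN
  have h1 : (1 / (N : ℝ)) * ∑ i, |f i (u i) - f i (ustar i)| ≤
      MJs / 2 * ((1 / (N : ℝ)) * ∑ i, ‖u i - ustar i‖ ^ 2) := by
    rw [show MJs / 2 * ((1 / (N : ℝ)) * ∑ i, ‖u i - ustar i‖ ^ 2)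
        = (1 / (N : ℝ)) * (MJs / 2 * ∑ i, ‖u i - ustar i‖ ^ 2) by ring]
    exact mul_le_mul_of_nonneg_left hsum (by positivity)
  have h2 : (0:ℝ) ≤ MHs / 6 * ε ^ 3 := by positivity
  linarith
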